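/- Let X and Y be Banach spaces and for each natural number k let θ_k : X → Y be a (not necessarily bounded) linear map. Suppose that for every sequence (x_k) in X converging to 0 in norm, the sequence (θ_k(x_k)) converges to 0 in norm in Y. Then there exists n₀ ∈ ℕ such that each θ_n with n ≥ n₀ is bounded and sup_{n ≥ n₀} ‖θ_n‖ < ∞. -/

import Mathlib

open Filter Topology

theorem stmt_0
    {X Y : Type*} [NormedAddCommGroup X] [NormedSpace ℂ X] [CompleteSpace X]
    [NormedAddCommGroup Y] [NormedSpace ℂ Y] [CompleteSpace Y]
    (θ : ℕ → (X →ₗ[ℂ] Y))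
    (h : ∀ x : ℕ → X, Tendsto x atTop (𝓝 0) →
      Tendsto (fun k => θ k (x k)) atTop (𝓝 0)) :
    ∃ n₀ : ℕ, ∃ C : ℝ, ∀ n ≥ n₀, ∀ x : X, ‖θ n x‖ ≤ C * ‖x‖ := by
  classical
  by_contra hc
  push_neg at hc
  have hnorm1 : ∀ K : ℕ, ‖(((K:ℂ) + 1))⁻¹‖ = ((K : ℝ) + 1)⁻¹ := by
    intro K
    rw [norm_inv, show ((K:ℂ)+1) = ((K+1:ℕ):ℂ) by push_cast; ring, Complex.norm_natCast]
    push_cast; ring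
  have key2 : ∀ n₀ k : ℕ, ∃ n, n₀ < n ∧ ∃ u : X, ‖u‖ ≤ 1 ∧ ((k : ℝ) + 1)^2 < ‖θ n u‖ := by
    intro n₀ k
    obtain ⟨n, hn, x, hx⟩ := hc (n₀ + 1) (((k : ℝ) + 1)^2)
    have hx0 : x ≠ 0 := by
      rintro rfl
      simp at hx
    have hxpos : (0:ℝ) < ‖x‖ := norm_pos_iff.mpr hx0
    refine ⟨n, by omega, (‖x‖⁻¹ : ℂ) • x, ?_, ?_⟩
    · have hne : ‖x‖ ≠ 0 := ne_of_gt hxpos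
      simp [norm_smul, abs_of_nonneg (inv_nonneg.2 (norm_nonneg x)),
        inv_mul_cancel₀ hne]
    · rw [map_smul, norm_smul]
      have h1 : ‖(‖x‖⁻¹ : ℂ)‖ = ‖x‖⁻¹ := by
        simp [abs_of_nonneg (inv_nonneg.2 (norm_nonneg x))]
      rw [h1, inv_mul_eq_div, lt_div_iff₀ hxpos]
      exact hx
  choose N hN U hU1 hU2 using key2
  let ns : ℕ → ℕ := fun k => Nat.rec (N 0 0) (fun k ih => N ih (k+1)) k
  let uu : ℕ → X := fun k => Nat.rec (U 0 0) (fun k _ => U (ns k) (k+1)) k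
  have hns_succ : ∀ k, ns (k+1) = N (ns k) (k+1) := fun k => rfl
  have hns_mono : StrictMono ns := by
    apply strictMono_nat_of_lt_succ
    intro k
    rw [hns_succ]
    exact hN (ns k) (k+1)
  have hbig : ∀ k : ℕ, ((k : ℝ) + 1)^2 < ‖θ (ns k) (uu k)‖ := by
    intro k
    cases k with
    | zero => exact hU2 0 0
    | succ k => simpa using hU2 (ns k) (k+1)
  have hsmall : ∀ k : ℕ, ‖uu k‖ ≤ 1 := by
    intro k
    cases k with
    | zero => exact hU1 0 0
    | succ k => exact hU1 (ns k) (k+1)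
  letI : ∀ m : ℕ, Decidable (∃ k, ns k = m) := fun m => Classical.propDecidable _
  let y : ℕ → X := fun m =>
    if hm : ∃ k, ns k = m then (((hm.choose : ℂ)) + 1)⁻¹ • uu hm.choose else 0
  have hy_ns : ∀ k, y (ns k) = (((k : ℂ)) + 1)⁻¹ • uu k := by
    intro k
    have hm : ∃ j, ns j = ns k := ⟨k, rfl⟩
    have he : hm.choose = k := hns_mono.injective hm.choose_spec
    simp only [y, dif_pos hm, he]
  have hy_norm : ∀ m K, ns K < m → ‖y m‖ ≤ ((K : ℝ) + 1)⁻¹ := by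
    intro m K hKm
    by_cases hm : ∃ k, ns k = m
    · obtain ⟨k, hk⟩ := hm
      rw [← hk, hy_ns k, norm_smul, hnorm1]
      have hkK : K < k := by
        by_contra hle
        push_neg at hle
        have := hns_mono.le_iff_le.mpr hle
        omega
      calc ((k : ℝ) + 1)⁻¹ * ‖uu k‖ ≤ ((k : ℝ) + 1)⁻¹ * 1 :=
            mul_le_mul_of_nonneg_left (hsmall k) (by positivity)
        _ ≤ ((K : ℝ) + 1)⁻¹ := by
            rw [mul_one]
            apply inv_anti₀ (by positivity)
            have : (K : ℝ) < k := by exact_mod_cast hkK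
            linarith
    · simp only [y, dif_neg hm, norm_zero]
      positivity
  have hy0 : Tendsto y atTop (𝓝 0) := by
    rw [NormedAddCommGroup.tendsto_nhds_zero]
    intro ε hε
    obtain ⟨K, hK⟩ := exists_nat_gt ε⁻¹
    rw [eventually_atTop]
    refine ⟨ns K + 1, fun m hm => ?_⟩
    have h2 := hy_norm m K (by omega)
    have hKpos : (0:ℝ) < (K:ℝ) + 1 := by positivity
    have h3 : ((K : ℝ) + 1)⁻¹ < ε := by
      rw [inv_lt_comm₀ hKpos hε]
      linarith
    linarith
  have htends := (h y hy0).comp hns_mono.tendsto_atTop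
  rw [NormedAddCommGroup.tendsto_nhds_zero] at htends
  obtain ⟨K, hK⟩ := (eventually_atTop).1 (htends 1 one_pos)
  have hK1 := hK K le_rfl
  simp only [Function.comp] at hK1
  rw [hy_ns K, map_smul, norm_smul, hnorm1] at hK1
  have hb := hbig K
  have hKpos : (0:ℝ) < (K:ℝ) + 1 := by positivity
  nlinarith [inv_pos.2 hKpos, inv_mul_cancel₀ (ne_of_gt hKpos)]
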